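/- arXiv:2409.00908 — 4 statements merged into one kernel-verified Lean document; each statement's English description precedes it below -/
import Mathlib

section
/- Let φ: ℝ → ℝ be convex, differentiable at 0 with φ'(0) < 0, and differentiable on (0,∞). Suppose there is a continuous function g: [z₀,∞) → (0,∞) with z₀ > 0 such that ∫_{z₀}^∞ g(z) dz converges and z ↦ φ'(z)/g(z) is nondecreasing on [z₀,∞). Then φ is bounded below on ℝ. -/
open Set MeasureTheory

theorem superlinear_raising_tail_bddBelow (φ φ' g : ℝ → ℝ)
    (hφ : ConvexOn ℝ Set.univ φ)
    (d : ℝ) (hd : HasDerivAt φ d 0) (hneg : d < 0)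
    (hdiff : ∀ z : ℝ, 0 < z → HasDerivAt φ (φ' z) z)
    (z₀ : ℝ) (hz₀ : 0 < z₀)
    (hgcont : ContinuousOn g (Ici z₀))
    (hgpos : ∀ z ∈ Ici z₀, 0 < g z)
    (hgint : IntegrableOn g (Ici z₀) volume)
    (hmono : ∀ a b : ℝ, z₀ ≤ a → a ≤ b → φ' a / g a ≤ φ' b / g b) :
    BddBelow (Set.range φ) := by
  -- supporting line lemma
  have support : ∀ (a m x : ℝ), HasDerivAt φ m a → φ a + m * (x - a) ≤ φ x := by
    intro a m x hma
    rcases lt_trichotomy a x with h | rfl | h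
    · have := hφ.le_slope_of_hasDerivAt (mem_univ a) (mem_univ x) h hma
      rw [slope_def_field] at this
      have hx : (0:ℝ) < x - a := by linarith
      rw [le_div_iff₀ hx] at this
      nlinarith
    · simp
    · have := hφ.slope_le_of_hasDerivAt (mem_univ x) (mem_univ a) h hma
      rw [slope_def_field] at this
      have hx : (0:ℝ) < a - x := by linarith
      rw [div_le_iff₀ hx] at this
      nlinarith
  -- φ' is monotone on Ioi 0
  have mono : ∀ a b : ℝ, 0 < a → a ≤ b → φ' a ≤ φ' b := by
    intro a b ha hab
    rcases eq_or_lt_of_le hab with rfl | hab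
    · exact le_refl _
    · have h1 := support a (φ' a) b (hdiff a ha)
      have h2 := support b (φ' b) a (hdiff b (ha.trans hab))
      nlinarith
  by_cases h : ∃ b, 0 < b ∧ 0 ≤ φ' b
  · obtain ⟨b, hb, hb'⟩ := h
    refine ⟨min (φ 0 + d * b) (φ b), ?_⟩
    rintro y ⟨x, rfl⟩
    rcases le_total x b with hx | hx
    · have h1 := support 0 d x hd
      have : φ 0 + d * b ≤ φ x := by nlinarith
      exact le_trans (min_le_left _ _) this
    · have h1 := support b (φ' b) x (hdiff b hb)
      have : φ b ≤ φ x := by nlinarith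
      exact le_trans (min_le_right _ _) this
  · push_neg at h
    set I := ∫ z in Ici z₀, g z
    set r₀ := φ' z₀ / g z₀ with hr₀
    have hgz₀ := hgpos z₀ (self_mem_Ici)
    have hr₀neg : r₀ < 0 := div_neg_of_neg_of_pos (h z₀ hz₀) hgz₀
    refine ⟨min (φ 0 + d * z₀) (φ z₀ + r₀ * I), ?_⟩
    rintro y ⟨x, rfl⟩
    rcases le_total x z₀ with hx | hx
    · have h1 := support 0 d x hd
      have : φ 0 + d * z₀ ≤ φ x := by nlinarith
      exact le_trans (min_le_left _ _) this
    · -- x ≥ z₀ : FTC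
      have hIcc : uIcc z₀ x = Icc z₀ x := uIcc_of_le hx
      have hmonoφ' : MonotoneOn φ' (uIcc z₀ x) := by
        rw [hIcc]
        intro a ha b hb hab
        exact mono a b (hz₀.trans_le ha.1) hab
      have hint : IntervalIntegrable φ' volume z₀ x := hmonoφ'.intervalIntegrable
      have hgint' : IntervalIntegrable g volume z₀ x := by
        apply ContinuousOn.intervalIntegrable
        exact hgcont.mono (by rw [hIcc]; exact Icc_subset_Ici_self)
      have hftc : ∫ t in z₀..x, φ' t = φ x - φ z₀ := by
        apply intervalIntegral.integral_eq_sub_of_hasDerivAt _ hint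
        intro t ht
        rw [hIcc] at ht
        exact hdiff t (hz₀.trans_le ht.1)
      have hpt : ∀ t ∈ Icc z₀ x, r₀ * g t ≤ φ' t := by
        intro t ht
        have hgt := hgpos t (Icc_subset_Ici_self ht)
        have h1 : r₀ ≤ φ' t / g t := hmono z₀ t le_rfl ht.1
        have h2 := mul_le_mul_of_nonneg_right h1 hgt.le
        rwa [div_mul_cancel₀ _ hgt.ne'] at h2
      have hle1 : r₀ * (∫ t in z₀..x, g t) ≤ ∫ t in z₀..x, φ' t := by
        rw [← intervalIntegral.integral_const_mul]
        apply intervalIntegral.integral_mono_on hx (hgint'.const_mul r₀) hint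
        exact hpt
      have hle2 : (∫ t in z₀..x, g t) ≤ I := by
        rw [intervalIntegral.integral_of_le hx]
        apply setIntegral_mono_set hgint
        · exact (ae_restrict_iff' measurableSet_Ici).2
            (Filter.Eventually.of_forall fun z hz => (hgpos z hz).le)
        · exact Filter.Eventually.of_forall fun z hz =>
            mem_Ici.2 hz.1.le
      have hle3 : r₀ * I ≤ r₀ * (∫ t in z₀..x, g t) :=
        mul_le_mul_of_nonpos_left hle2 hr₀neg.le
      have : φ z₀ + r₀ * I ≤ φ x := by
        have := hle3.trans (hle1.trans_eq hftc)
        linarith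
      exact le_trans (min_le_right _ _) this
end

section
/- Given real numbers z₁ < z₂ < ⋯ < z_{B} (with some index b₀ such that z_{b₀} = 0) and reals g₁ ≤ g₂ ≤ ⋯ ≤ g_{B} with g_{b₀} < 0, there exists a convex function φ: ℝ → ℝ that is bounded below, differentiable at 0 with φ'(0) = g_{b₀} < 0, and such that g_i is a subgradient of φ at z_i for every i. -/
open Finset

private lemma convexOn_relu (c : ℝ) : ConvexOn ℝ Set.univ (fun x : ℝ => max (x - c) 0) :=
  ((convexOn_id convex_univ).sub (concaveOn_const c convex_univ)).sup
    (convexOn_const (0 : ℝ) convex_univ)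

private lemma convexOn_fsum {ι : Type*} (s : Finset ι) (f : ι → ℝ → ℝ)
    (h : ∀ i ∈ s, ConvexOn ℝ Set.univ (f i)) :
    ConvexOn ℝ Set.univ (fun x => ∑ i ∈ s, f i x) := by
  classical
  induction s using Finset.induction_on with
  | empty => simpa using convexOn_const (0 : ℝ) convex_univ
  | insert _ _ hnot ih =>
    rename_i a t
    simp only [Finset.sum_insert hnot]
    exact (h a (Finset.mem_insert_self a t)).add
      (ih fun i hi => h i (Finset.mem_insert_of_mem hi))

private lemma convexOn_lin (a : ℝ) : ConvexOn ℝ Set.univ (fun w : ℝ => a * w) :=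
  ⟨convex_univ, by
    intro x _ y _ p q _ _ _
    simp only [smul_eq_mul]
    exact le_of_eq (by ring)⟩

theorem exists_bcc_loss_matching_derivatives (B : ℕ) (z g : Fin B → ℝ)
    (hz : StrictMono z) (b₀ : Fin B) (hz0 : z b₀ = 0)
    (hg : Monotone g) (hgneg : g b₀ < 0) :
    ∃ φ : ℝ → ℝ, ConvexOn ℝ Set.univ φ ∧ BddBelow (Set.range φ) ∧
      HasDerivAt φ (g b₀) 0 ∧
      ∀ i : Fin B, ∀ w : ℝ, φ w ≥ φ (z i) + g i * (w - z i) := by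
  have hB : 0 < B := b₀.pos
  set G : ℕ → ℝ := fun k => g ⟨min k (B-1), by omega⟩ with hGdef
  set Z : ℕ → ℝ := fun k => z ⟨min k (B-1), by omega⟩ with hZdef
  have hGe : ∀ i : Fin B, G i = g i := by
    intro i
    have : min (i : ℕ) (B-1) = i := by omega
    simp [hGdef, this]
  have hZe : ∀ i : Fin B, Z i = z i := by
    intro i
    have : min (i : ℕ) (B-1) = i := by omega
    simp [hZdef, this]
  have hGmono : Monotone G := fun j k hjk => hg (by simp [Fin.le_def]; omega)
  have hZlt : ∀ k, k + 1 < B → Z k < Z (k+1) := by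
    intro k hk
    apply hz
    simp [Fin.lt_def]; omega
  have hZmono : Monotone Z := fun j k hjk => hz.monotone (by simp [Fin.le_def]; omega)
  have hG0 : G 0 ≤ g b₀ := by
    have := hGmono (Nat.zero_le (b₀ : ℕ)); rw [hGe b₀] at this; exact this
  have hG0neg : G 0 < 0 := lt_of_le_of_lt hG0 hgneg
  -- the slope increments and breakpoints
  set d : ℕ → ℝ := fun k => if k + 1 < B then G (k+1) - G k else 1 - G 0 with hddef
  set u : ℕ → ℝ := fun k => if k + 1 < B then (Z k + Z (k+1)) / 2 else Z (B-1) + 1 with hudef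
  have hd0 : ∀ k, 0 ≤ d k := by
    intro k
    simp only [hddef]
    split
    · have := hGmono (Nat.le_succ k); linarith
    · linarith
  set φ : ℝ → ℝ := fun w => G 0 * w + ∑ k ∈ range B, d k * max (w - u k) 0 with hφdef
  -- positions of breakpoints relative to the z i
  have hzb0 : Z b₀ = 0 := by rw [hZe b₀, hz0]
  have hu_lt : ∀ (i : Fin B) k, k < (i : ℕ) → u k < z i := by
    intro i k hk
    have hkB : k + 1 < B := by omega
    have h1 : Z k < Z (k+1) := hZlt k hkB
    have h2 : Z (k+1) ≤ Z i := hZmono (by omega)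
    rw [hZe i] at h2
    simp only [hudef, if_pos hkB]
    linarith
  have hu_gt : ∀ (i : Fin B) k, (i : ℕ) ≤ k → z i < u k := by
    intro i k hk
    have h2 : Z i ≤ Z k := hZmono hk
    rw [hZe i] at h2
    simp only [hudef]
    split
    · have h1 : Z k < Z (k+1) := hZlt k (by assumption)
      linarith
    · have h3 : Z k ≤ Z (B-1) := hz.monotone (by simp only [Fin.mk_le_mk]; omega)
      linarith
  -- telescoping sums of d
  have htel : ∀ m, m ≤ B - 1 → ∑ k ∈ range m, d k = G m - G 0 := by
    intro m hm
    have hc : ∀ k ∈ range m, d k = G (k+1) - G k := by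
      intro k hk
      rw [Finset.mem_range] at hk
      simp only [hddef]
      rw [if_pos (by omega)]
    rw [Finset.sum_congr rfl hc, Finset.sum_range_sub]
  -- subgradient property
  have hsub : ∀ i : Fin B, ∀ w : ℝ, φ w ≥ φ (z i) + g i * (w - z i) := by
    intro i w
    have key : ∀ k ∈ range B,
        d k * (if k < (i:ℕ) then (w - z i) else 0) ≤
          d k * max (w - u k) 0 - d k * max (z i - u k) 0 := by
      intro k hk
      rw [← mul_sub]
      split
      · -- k < i : z i > u k
        rename_i hki
        have h1 : u k < z i := hu_lt i k hki
        have h2 : max (z i - u k) 0 = z i - u k := max_eq_left (by linarith)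
        have h3 : w - u k ≤ max (w - u k) 0 := le_max_left _ _
        have : w - z i ≤ max (w - u k) 0 - max (z i - u k) 0 := by
          rw [h2]; linarith
        exact mul_le_mul_of_nonneg_left this (hd0 k)
      · -- k ≥ i : z i < u k
        rename_i hki
        have h1 : z i < u k := hu_gt i k (by omega)
        have h2 : max (z i - u k) 0 = 0 := max_eq_right (by linarith)
        have : (0:ℝ) ≤ max (w - u k) 0 - max (z i - u k) 0 := by
          rw [h2]; simp [le_max_right]
        exact mul_le_mul_of_nonneg_left this (hd0 k)
    have hsum := Finset.sum_le_sum key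
    have hsplit : ∑ k ∈ range B, d k * (if k < (i:ℕ) then (w - z i) else 0)
        = (G i - G 0) * (w - z i) := by
      have h1 : ∀ k ∈ range B, d k * (if k < (i:ℕ) then (w - z i) else 0)
          = if k < (i:ℕ) then d k * (w - z i) else 0 := by
        intro k _; split <;> simp
      rw [Finset.sum_congr rfl h1, ← Finset.sum_filter]
      have h2 : (range B).filter (fun k => k < (i:ℕ)) = range i := by
        ext k
        simp only [Finset.mem_filter, Finset.mem_range]
        constructor
        · rintro ⟨_, h⟩; exact h
        · intro h; exact ⟨by omega, h⟩
      rw [h2, ← Finset.sum_mul, htel i (by omega)]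
    rw [hsplit] at hsum
    have : φ w - φ (z i) ≥ (G 0) * (w - z i) + (G i - G 0) * (w - z i) := by
      simp only [hφdef]
      have expand : (G 0 * w + ∑ k ∈ range B, d k * max (w - u k) 0)
          - (G 0 * z i + ∑ k ∈ range B, d k * max (z i - u k) 0)
          = G 0 * (w - z i) + ∑ k ∈ range B,
              (d k * max (w - u k) 0 - d k * max (z i - u k) 0) := by
        rw [Finset.sum_sub_distrib]; ring
      rw [expand]
      linarith
    rw [hGe i] at this
    have : φ w - φ (z i) ≥ g i * (w - z i) := by linarith [this]
    linarith
  refine ⟨φ, ?_, ?_, ?_, hsub⟩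
  · -- convexity
    have h1 := convexOn_lin (G 0)
    have h2 := convexOn_fsum (range B) (fun k => fun w => d k * max (w - u k) 0)
      (fun k _ => (convexOn_relu (u k)).smul (hd0 k))
    exact h1.add h2
  · -- bounded below
    refine ⟨G 0 * u (B-1), ?_⟩
    rintro y ⟨w, rfl⟩
    have hmem : B - 1 ∈ range B := by simp [Finset.mem_range]; omega
    have h1 : d (B-1) * max (w - u (B-1)) 0 ≤ ∑ k ∈ range B, d k * max (w - u k) 0 :=
      Finset.single_le_sum (f := fun k => d k * max (w - u k) 0)
        (fun k _ => mul_nonneg (hd0 k) (le_max_right _ _)) hmem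
    have hdlast : d (B-1) = 1 - G 0 := by
      simp only [hddef]; rw [if_neg (by omega)]
    have : G 0 * u (B-1) ≤ G 0 * w + d (B-1) * max (w - u (B-1)) 0 := by
      rw [hdlast]
      rcases le_total w (u (B-1)) with h | h
      · have : max (w - u (B-1)) 0 = 0 := max_eq_right (by linarith)
        rw [this]
        nlinarith [hG0neg]
      · have : max (w - u (B-1)) 0 = w - u (B-1) := max_eq_left (by linarith)
        rw [this]
        nlinarith [hG0neg]
    simp only [hφdef]
    linarith
  · -- derivative at 0
    set C : ℝ := -∑ k ∈ range b₀, d k * u k with hCdef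
    have hψ : HasDerivAt (fun w : ℝ => g b₀ * w + C) (g b₀) 0 := by
      simpa using ((hasDerivAt_id (0:ℝ)).const_mul (g b₀)).add_const C
    have hbreak : ∀ k ∈ range B, ∀ᶠ w in nhds (0:ℝ),
        d k * max (w - u k) 0 = (if k < (b₀:ℕ) then d k * (w - u k) else 0) := by
      intro k _
      by_cases hkb : k < (b₀:ℕ)
      · have hu : u k < 0 := by have := hu_lt b₀ k hkb; rwa [hz0] at this
        filter_upwards [eventually_gt_nhds hu] with w hw
        rw [if_pos hkb, max_eq_left (by linarith)]
      · have hu : 0 < u k := by have := hu_gt b₀ k (by omega); rwa [hz0] at this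
        filter_upwards [eventually_lt_nhds hu] with w hw
        rw [if_neg hkb, max_eq_right (by linarith), mul_zero]
    have hall := (Filter.eventually_all_finset (range B)).2 hbreak
    have hev : φ =ᶠ[nhds (0:ℝ)] (fun w => g b₀ * w + C) := by
      filter_upwards [hall] with w hw
      simp only [hφdef]
      rw [Finset.sum_congr rfl hw, ← Finset.sum_filter]
      have h2 : (range B).filter (fun k => k < (b₀:ℕ)) = range b₀ := by
        ext k
        simp only [Finset.mem_filter, Finset.mem_range]
        constructor
        · rintro ⟨_, h⟩; exact h
        · intro h; exact ⟨by omega, h⟩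
      rw [h2]
      have h3 : ∑ k ∈ range b₀, d k * (w - u k)
          = (∑ k ∈ range b₀, d k) * w - ∑ k ∈ range b₀, d k * u k := by
        rw [Finset.sum_mul, ← Finset.sum_sub_distrib]
        exact Finset.sum_congr rfl (fun k _ => by ring)
      rw [h3, htel b₀ (by omega)]
      have h4 : G (b₀:ℕ) = g b₀ := hGe b₀
      rw [h4, hCdef]
      ring
    exact hψ.congr_of_eventuallyEq hev
end

section
/- Let φ: ℝ → ℝ be convex with a negative subgradient at 0 (i.e., some g ∈ ∂φ(0) with g < 0), and let η ∈ [0,1] with η ≠ 1/2. Then H⁻_φ(η) := inf{ η φ(α) + (1−η) φ(−α) : α(2η−1) ≤ 0 } = φ(0). -/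
theorem Hminus_eq_phi_zero (φ : ℝ → ℝ) (hφ : ConvexOn ℝ Set.univ φ)
    (g : ℝ) (hg : g < 0) (hsub : ∀ z : ℝ, φ z ≥ φ 0 + g * (z - 0))
    (η : ℝ) (hη : η ∈ Set.Icc (0 : ℝ) 1) (hne : η ≠ 1 / 2) :
    sInf ((fun α => η * φ α + (1 - η) * φ (-α)) '' {α : ℝ | α * (2 * η - 1) ≤ 0})
      = φ 0 := by
  obtain ⟨h0, h1⟩ := hη
  have key : ∀ α ∈ {α : ℝ | α * (2 * η - 1) ≤ 0},
      φ 0 ≤ η * φ α + (1 - η) * φ (-α) := by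
    intro α hα
    have jensen : φ (η * α + (1 - η) * (-α)) ≤ η * φ α + (1 - η) * φ (-α) :=
      hφ.2 (Set.mem_univ α) (Set.mem_univ (-α)) h0 (by linarith) (by ring)
    have heq : η * α + (1 - η) * (-α) = α * (2 * η - 1) := by ring
    rw [heq] at jensen
    have := hsub (α * (2 * η - 1))
    nlinarith [mul_nonneg (neg_nonneg.mpr hg.le) (neg_nonneg.mpr hα)]
  apply le_antisymm
  · apply csInf_le
    · exact ⟨φ 0, by rintro _ ⟨α, hα, rfl⟩; exact key α hα⟩
    · exact ⟨0, by simp, by simp; ring⟩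
  · apply le_csInf ⟨_, Set.mem_image_of_mem _ (by simp : (0:ℝ) ∈ {α : ℝ | α * (2 * η - 1) ≤ 0})⟩
    rintro _ ⟨α, hα, rfl⟩; exact key α hα
end

section
/- Let φ(z) = π₁ exp(−z) + π₂ log(1 + exp(−2z)) with π₁, π₂ > 0, π₁ + π₂ = 1. Define ψ(θ) = π₁(1 − √(1 − θ²)) + (π₂/2)((1−θ)log(1−θ) + (1+θ)log(1+θ)) for θ ∈ [0,1]. Then ψ(θ) ≥ ((2π₁ + π₂)/4) θ² for all θ ∈ [0,1]. -/
open Real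

lemma aux_log_diff (θ : ℝ) (h0 : 0 ≤ θ) (h1 : θ < 1) :
    2 * θ ≤ Real.log (1 + θ) - Real.log (1 - θ) := by
  set f : ℝ → ℝ := fun x => Real.log (1 + x) - Real.log (1 - x) - 2 * x with hf
  have key : ∀ x ∈ Set.Ico (0:ℝ) 1, 0 ≤ f x := by
    have hmono : MonotoneOn f (Set.Ico (0:ℝ) 1) := by
      apply monotoneOn_of_deriv_nonneg (convex_Ico 0 1)
      · apply ContinuousOn.sub (ContinuousOn.sub _ _) (by fun_prop)
        · apply ContinuousOn.log (by fun_prop)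
          intro x hx; simp at hx; linarith [hx.1]
        · apply ContinuousOn.log (by fun_prop)
          intro x hx; simp at hx; linarith [hx.2]
      · intro x hx
        rw [interior_Ico] at hx
        have hx1 : (1:ℝ) + x ≠ 0 := by simp at hx; nlinarith [hx.1, hx.2]
        have hx2 : (1:ℝ) - x ≠ 0 := by simp at hx; nlinarith [hx.2]
        apply DifferentiableAt.differentiableWithinAt
        apply DifferentiableAt.sub (DifferentiableAt.sub _ _) (by fun_prop)
        · exact (Real.differentiableAt_log hx1).comp x (by fun_prop)
        · exact (Real.differentiableAt_log hx2).comp x (by fun_prop)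
      · intro x hx
        rw [interior_Ico] at hx
        simp only [Set.mem_Ioo] at hx
        have hx1 : (1:ℝ) + x ≠ 0 := by nlinarith [hx.1, hx.2]
        have hx2 : (1:ℝ) - x ≠ 0 := by nlinarith [hx.2]
        have hd1 : HasDerivAt (fun x : ℝ => Real.log (1 + x)) (1 / (1 + x)) x := by
          have := (Real.hasDerivAt_log hx1).comp x
            ((hasDerivAt_const x (1:ℝ)).add (hasDerivAt_id x))
          simpa [Function.comp_def] using this
        have hd2 : HasDerivAt (fun x : ℝ => Real.log (1 - x)) (-(1 / (1 - x))) x := by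
          have := (Real.hasDerivAt_log hx2).comp x
            ((hasDerivAt_const x (1:ℝ)).sub (hasDerivAt_id x))
          simpa [Function.comp_def] using this
        have hd3 : HasDerivAt (fun x : ℝ => 2 * x) 2 x := by
          simpa using (hasDerivAt_id x).const_mul (2:ℝ)
        have hd : HasDerivAt f (1 / (1 + x) - (-(1 / (1 - x))) - 2) x :=
          (hd1.sub hd2).sub hd3
        rw [hd.deriv]
        have h1x : (0:ℝ) < 1 + x := by linarith [hx.1]
        have h2x : (0:ℝ) < 1 - x := by linarith [hx.2]
        have heq : 1 / (1 + x) - -(1 / (1 - x)) - 2 = 2 * x ^ 2 / ((1 + x) * (1 - x)) := by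
          field_simp; ring
        rw [heq]
        positivity
    intro x hx
    have h0' : (0:ℝ) ∈ Set.Ico (0:ℝ) 1 := by constructor <;> norm_num
    have := hmono h0' hx hx.1
    simpa [hf] using this
  have := key θ ⟨h0, h1⟩
  simp only [hf] at this
  linarith

lemma aux_entropy (θ : ℝ) (h0 : 0 ≤ θ) (h1 : θ ≤ 1) :
    θ ^ 2 ≤ (1 - θ) * Real.log (1 - θ) + (1 + θ) * Real.log (1 + θ) := by
  set g : ℝ → ℝ :=
    fun x => (1 - x) * Real.log (1 - x) + (1 + x) * Real.log (1 + x) - x ^ 2 with hg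
  have hmono : MonotoneOn g (Set.Icc (0:ℝ) 1) := by
    apply monotoneOn_of_deriv_nonneg (convex_Icc 0 1)
    · have c1 : Continuous fun x : ℝ => (1 - x) * Real.log (1 - x) :=
        Real.continuous_mul_log.comp
          ((continuous_const.sub continuous_id) : Continuous fun x : ℝ => 1 - x)
      have c2 : Continuous fun x : ℝ => (1 + x) * Real.log (1 + x) :=
        Real.continuous_mul_log.comp
          ((continuous_const.add continuous_id) : Continuous fun x : ℝ => 1 + x)
      exact ((c1.add c2).sub (continuous_pow 2)).continuousOn
    · intro x hx
      rw [interior_Icc] at hx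
      simp only [Set.mem_Ioo] at hx
      have hx1 : (1:ℝ) + x ≠ 0 := by nlinarith [hx.1, hx.2]
      have hx2 : (1:ℝ) - x ≠ 0 := by nlinarith [hx.2]
      apply DifferentiableAt.differentiableWithinAt
      apply DifferentiableAt.sub (DifferentiableAt.add _ _) (by fun_prop)
      · exact (by fun_prop : DifferentiableAt ℝ (fun x : ℝ => 1 - x) x).mul
          ((Real.differentiableAt_log hx2).comp x (by fun_prop))
      · exact (by fun_prop : DifferentiableAt ℝ (fun x : ℝ => 1 + x) x).mul
          ((Real.differentiableAt_log hx1).comp x (by fun_prop))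
    · intro x hx
      rw [interior_Icc] at hx
      simp only [Set.mem_Ioo] at hx
      have hx1 : (1:ℝ) + x ≠ 0 := by nlinarith [hx.1, hx.2]
      have hx2 : (1:ℝ) - x ≠ 0 := by nlinarith [hx.2]
      have hd2 : HasDerivAt (fun x : ℝ => Real.log (1 - x)) (-(1 / (1 - x))) x := by
        have := (Real.hasDerivAt_log hx2).comp x
          ((hasDerivAt_const x (1:ℝ)).sub (hasDerivAt_id x))
        simpa [Function.comp_def] using this
      have hd1 : HasDerivAt (fun x : ℝ => Real.log (1 + x)) (1 / (1 + x)) x := by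
        have := (Real.hasDerivAt_log hx1).comp x
          ((hasDerivAt_const x (1:ℝ)).add (hasDerivAt_id x))
        simpa [Function.comp_def] using this
      have hu2 : HasDerivAt (fun x : ℝ => (1:ℝ) - x) (-1) x := by
        simpa using (hasDerivAt_id' x).const_sub (1:ℝ)
      have hu1 : HasDerivAt (fun x : ℝ => (1:ℝ) + x) 1 x := by
        simpa using (hasDerivAt_id' x).const_add (1:ℝ)
      have hdA : HasDerivAt (fun x : ℝ => (1 - x) * Real.log (1 - x))
          ((-1) * Real.log (1 - x) + (1 - x) * (-(1 / (1 - x)))) x := hu2.mul hd2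
      have hdB : HasDerivAt (fun x : ℝ => (1 + x) * Real.log (1 + x))
          (1 * Real.log (1 + x) + (1 + x) * (1 / (1 + x))) x := hu1.mul hd1
      have hdsq : HasDerivAt (fun x : ℝ => x ^ 2) (2 * x) x := by
        simpa using hasDerivAt_pow 2 x
      have hd : HasDerivAt g
          (((-1) * Real.log (1 - x) + (1 - x) * (-(1 / (1 - x))))
            + (1 * Real.log (1 + x) + (1 + x) * (1 / (1 + x))) - 2 * x) x :=
        (hdA.add hdB).sub hdsq
      rw [hd.deriv]
      have e1 : (1 - x) * (-(1 / (1 - x))) = -1 := by field_simp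
      have e2 : (1 + x) * (1 / (1 + x)) = 1 := by field_simp
      rw [e1, e2]
      have := aux_log_diff x (le_of_lt hx.1) hx.2
      linarith
  have h0' : (0:ℝ) ∈ Set.Icc (0:ℝ) 1 := by constructor <;> norm_num
  have := hmono h0' ⟨h0, h1⟩ h0
  simp only [hg] at this
  simp at this
  linarith

lemma aux_sqrt (θ : ℝ) (h0 : 0 ≤ θ) (h1 : θ ≤ 1) :
    θ ^ 2 / 2 ≤ 1 - Real.sqrt (1 - θ ^ 2) := by
  have key : Real.sqrt (1 - θ ^ 2) ≤ 1 - θ ^ 2 / 2 := by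
    have h2 : (1 - θ ^ 2 / 2) ^ 2 = 1 - θ ^ 2 + θ ^ 4 / 4 := by ring
    have h3 : Real.sqrt (1 - θ ^ 2) ≤ Real.sqrt ((1 - θ ^ 2 / 2) ^ 2) := by
      apply Real.sqrt_le_sqrt; nlinarith
    rwa [Real.sqrt_sq (by nlinarith)] at h3
  linarith

theorem psi_quadratic_lower_bound (π₁ π₂ : ℝ) (h1 : 0 < π₁) (h2 : 0 < π₂)
    (hsum : π₁ + π₂ = 1) (θ : ℝ) (hθ : θ ∈ Set.Icc (0 : ℝ) 1) :
    π₁ * (1 - Real.sqrt (1 - θ ^ 2)) +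
      π₂ / 2 * ((1 - θ) * Real.log (1 - θ) + (1 + θ) * Real.log (1 + θ))
      ≥ (2 * π₁ + π₂) / 4 * θ ^ 2 := by
  obtain ⟨hθ0, hθ1⟩ := hθ
  have hA := aux_sqrt θ hθ0 hθ1
  have hB := aux_entropy θ hθ0 hθ1
  nlinarith [mul_le_mul_of_nonneg_left hA (le_of_lt h1),
    mul_le_mul_of_nonneg_left hB (by linarith : (0:ℝ) ≤ π₂ / 2),
    sq_nonneg θ]
end
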